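/- For every k ≥ 1 and every nonincreasing tuple α ∈ 𝒵^k, the following identity of rational functions in ω holds: P_α(ω) + ω^{ν(α,0)} P_{α−1}(ω) = P_{α−1}(ω) + ω^{ν(α,1)} P_α(ω), where α−1 denotes the entrywise shift of α by −1. -/

import Mathlib

noncomputable section
open scoped BigOperators Classical

abbrev K : Type := RatFunc ℂ

noncomputable def ω : K := RatFunc.X

def nu {k : ℕ} (α : Fin k → ℤ) (i : ℤ) : ℕ :=
  (Finset.univ.filter (fun j => α j = i)).card

def shift {k : ℕ} (α : Fin k → ℤ) (m : ℤ) : Fin k → ℤ := fun j => α j + m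

def Adm (k : ℕ) : Set (Fin k → ℤ) :=
  {α | (∀ j : Fin k, -((j : ℕ) : ℤ) ≤ α j ∧ α j ≤ (k : ℤ) - ((j : ℕ) : ℤ) - 1) ∧
       (∀ i : Fin k, ∀ h : (i : ℕ) + 1 < k, α i ≤ α ⟨(i : ℕ) + 1, h⟩ + 1)}

def Noninc (k : ℕ) : Set (Fin k → ℤ) :=
  {α | ∀ i : Fin k, ∀ h : (i : ℕ) + 1 < k,
      α ⟨(i : ℕ) + 1, h⟩ ≤ α i ∧ α i ≤ α ⟨(i : ℕ) + 1, h⟩ + 1}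

def NSet (k : ℕ) : Set (Fin (k+1) → ℤ) :=
  {α | α ∈ Adm (k+1) ∧ α ∈ Noninc (k+1) ∧ α (Fin.last k) = 0}

noncomputable def gbinom (m r : ℕ) : K :=
  ∏ s ∈ Finset.range r, (1 - ω ^ (m - s)) / (1 - ω ^ (s + 1))

noncomputable def P {k : ℕ} (α : Fin (k+1) → ℤ) : K :=
  if α ∈ Adm (k+1) ∩ Noninc (k+1) then
    (∏ i ∈ Finset.Icc (1 : ℤ) (α 0),
        gbinom (nu α i + nu α (i-1) - 1) (nu α i)) *
    (∏ i ∈ Finset.Icc (α (Fin.last k) + 1) (0 : ℤ),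
        gbinom (nu α i + nu α (i-1) - 1) (nu α (i-1)))
  else 0

/-! ### Auxiliary material -/

lemma one_sub_pow_ne (s : ℕ) : (1 : K) - ω ^ (s+1) ≠ 0 := by
  have h : (1 : K) - ω ^ (s+1) = algebraMap (Polynomial ℂ) K (1 - Polynomial.X ^ (s+1)) := by
    simp [ω, RatFunc.algebraMap_X, map_sub, map_pow]
  rw [h]
  apply RatFunc.algebraMap_ne_zero
  intro h'
  have := congrArg (fun p => Polynomial.coeff p 0) h'
  simp [Polynomial.coeff_X_pow] at this

noncomputable def qf (n : ℕ) : K := ∏ s ∈ Finset.range n, (1 - ω ^ (s+1))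

lemma qf_ne_zero (n : ℕ) : qf n ≠ 0 :=
  Finset.prod_ne_zero_iff.2 fun s _ => one_sub_pow_ne s

lemma qf_succ (n : ℕ) : qf (n+1) = qf n * (1 - ω ^ (n+1)) := Finset.prod_range_succ _ _

lemma num_prod (m r : ℕ) (h : r ≤ m) :
    (∏ s ∈ Finset.range r, (1 - ω ^ (m - s))) * qf (m - r) = qf m := by
  induction r with
  | zero => simp
  | succ r ih =>
    have hr : r ≤ m := by omega
    rw [Finset.prod_range_succ]
    have h1 : m - r = (m - (r+1)) + 1 := by omega
    have := ih hr
    rw [h1, qf_succ] at this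
    rw [← this]
    rw [h1]
    ring

lemma gbinom_eq (m r : ℕ) (h : r ≤ m) : gbinom m r = qf m / (qf r * qf (m-r)) := by
  have hd : (∏ s ∈ Finset.range r, (1 - ω ^ (s+1))) = qf r := rfl
  rw [gbinom, Finset.prod_div_distrib, hd, ← num_prod m r h,
    mul_div_mul_right _ _ (qf_ne_zero (m-r))]

lemma gbinom_zero_of_lt (m r : ℕ) (h : m < r) : gbinom m r = 0 := by
  apply Finset.prod_eq_zero (Finset.mem_range.2 h)
  show (1 - ω ^ (m - m)) / (1 - ω ^ (m + 1)) = 0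
  simp

lemma gbinom_rec (a b : ℕ) :
    gbinom (a + b - 1) a * (1 - ω ^ a) = gbinom (a + b - 1) b * (1 - ω ^ b) := by
  rcases Nat.eq_zero_or_pos a with ha | ha
  · subst ha
    rcases Nat.eq_zero_or_pos b with hb | hb
    · subst hb; simp
    · rw [gbinom_zero_of_lt (0 + b - 1) b (by omega)]
      simp
  rcases Nat.eq_zero_or_pos b with hb | hb
  · subst hb
    rw [gbinom_zero_of_lt (a + 0 - 1) a (by omega)]
    simp
  obtain ⟨a', rfl⟩ : ∃ a', a = a' + 1 := ⟨a - 1, by omega⟩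
  obtain ⟨b', rfl⟩ : ∃ b', b = b' + 1 := ⟨b - 1, by omega⟩
  rw [gbinom_eq _ _ (by omega), gbinom_eq _ _ (by omega)]
  have h1 : a' + 1 + (b' + 1) - 1 - (a' + 1) = b' := by omega
  have h2 : a' + 1 + (b' + 1) - 1 - (b' + 1) = a' := by omega
  rw [h1, h2, qf_succ a', qf_succ b']
  have na := qf_ne_zero a'
  have nb := qf_ne_zero b'
  have na1 := one_sub_pow_ne a'
  have nb1 := one_sub_pow_ne b'
  field_simp

lemma nu_shift {k : ℕ} (α : Fin k → ℤ) (m i : ℤ) : nu (shift α m) i = nu α (i - m) := by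
  unfold nu shift
  congr 1
  apply Finset.filter_congr
  intro j _
  constructor <;> intro h <;> omega

lemma nu_eq_zero {k : ℕ} (α : Fin k → ℤ) (i : ℤ) (h : ∀ j, α j ≠ i) : nu α i = 0 :=
  Finset.card_eq_zero.2 (Finset.filter_eq_empty_iff.2 fun j _ => h j)

lemma noninc_pair {k : ℕ} {α : Fin (k+1) → ℤ} (hα : α ∈ Noninc (k+1)) :
    ∀ n : ℕ, ∀ i j : Fin (k+1), (j : ℕ) = (i : ℕ) + n →
      α j ≤ α i ∧ α i ≤ α j + (n : ℤ) := by
  intro n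
  induction n with
  | zero =>
    intro i j hij
    have : i = j := Fin.ext (by omega)
    subst this
    simp
  | succ n ih =>
    intro i j hij
    have hj := j.isLt
    have hlt : (i : ℕ) + n < k + 1 := by omega
    set j' : Fin (k+1) := ⟨(i : ℕ) + n, hlt⟩ with hj'
    have h1 := ih i j' rfl
    have hlt2 : (j' : ℕ) + 1 < k + 1 := by simp [hj']; omega
    have h2 := hα j' hlt2
    have hje : (⟨(j' : ℕ) + 1, hlt2⟩ : Fin (k+1)) = j := Fin.ext (by simp [hj']; omega)
    rw [hje] at h2
    push_cast
    omega

noncomputable def Ff {k : ℕ} (α : Fin (k+1) → ℤ) (i : ℤ) : K :=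
  gbinom (nu α i + nu α (i-1) - 1) (nu α i)

noncomputable def Gg {k : ℕ} (α : Fin (k+1) → ℤ) (i : ℤ) : K :=
  gbinom (nu α i + nu α (i-1) - 1) (nu α (i-1))

lemma Ff_shift {k : ℕ} (α : Fin (k+1) → ℤ) (i : ℤ) :
    Ff (shift α (-1)) i = Ff α (i+1) := by
  simp only [Ff, nu_shift]
  have h1 : i - (-1) = i + 1 := by ring
  have h2 : i - 1 - (-1) = i := by ring
  have h3 : (i+1) - 1 = i := by ring
  rw [h1, h2, h3]

lemma Gg_shift {k : ℕ} (α : Fin (k+1) → ℤ) (i : ℤ) :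
    Gg (shift α (-1)) i = Gg α (i+1) := by
  simp only [Gg, nu_shift]
  have h1 : i - (-1) = i + 1 := by ring
  have h2 : i - 1 - (-1) = i := by ring
  have h3 : (i+1) - 1 = i := by ring
  rw [h1, h2, h3]

lemma prod_Icc_shift (f : ℤ → K) (a b : ℤ) :
    ∏ i ∈ Finset.Icc (a+1) (b+1), f i = ∏ i ∈ Finset.Icc a b, f (i+1) := by
  rw [← Finset.map_add_right_Icc, Finset.prod_map]
  rfl

lemma Icc_split (a b : ℤ) (h : a ≤ b) :
    Finset.Icc a b = insert a (Finset.Icc (a+1) b) := by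
  ext i
  simp only [Finset.mem_Icc, Finset.mem_insert]
  omega

lemma Icc_split_top (a b : ℤ) (h : a ≤ b) :
    Finset.Icc a b = insert b (Finset.Icc a (b-1)) := by
  ext i
  simp only [Finset.mem_Icc, Finset.mem_insert]
  omega

/-- the key identity for the polynomials `P_α`. -/
theorem stmt2 (k : ℕ) (α : Fin (k+1) → ℤ) (hα : α ∈ Noninc (k+1)) :
    P α + ω ^ (nu α 0) * P (shift α (-1))
      = P (shift α (-1)) + ω ^ (nu α 1) * P α := by
  have hA : ∀ j : Fin (k+1), α j ≤ α 0 ∧ α 0 ≤ α j + (j : ℕ) :=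
    fun j => noninc_pair hα (j : ℕ) 0 j (by simp)
  have hB : ∀ j : Fin (k+1), α (Fin.last k) ≤ α j ∧
      α j ≤ α (Fin.last k) + ((k - (j : ℕ) : ℕ) : ℤ) :=
    fun j => noninc_pair hα (k - (j : ℕ)) j (Fin.last k)
      (by have := j.isLt; simp only [Fin.val_last]; omega)
  by_cases h0 : α 0 ≤ 0
  · -- degenerate: all entries ≤ 0, so nu α 1 = 0 and P (α - 1) = 0
    have hν1 : nu α 1 = 0 := nu_eq_zero _ _ (fun j => by have := (hA j).1; omega)
    have hPβ : P (shift α (-1)) = 0 := by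
      rw [P, if_neg]
      intro hmem
      have h := hmem.1.1 0
      simp only [shift, Fin.val_zero, Nat.cast_zero, neg_zero] at h
      omega
    rw [hν1, hPβ]
    simp
  by_cases hk : 1 ≤ α (Fin.last k)
  · -- degenerate: all entries ≥ 1, so nu α 0 = 0 and P α = 0
    have hν0 : nu α 0 = 0 := nu_eq_zero _ _ (fun j => by have := (hB j).1; omega)
    have hPα : P α = 0 := by
      rw [P, if_neg]
      intro hmem
      have h := (hmem.1.1 (Fin.last k)).2
      simp only [Fin.val_last] at h
      omega
    rw [hν0, hPα]
    simp
  -- main case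
  push_neg at h0 hk
  have h0' : 1 ≤ α 0 := h0
  have hk' : α (Fin.last k) ≤ 0 := by omega
  have hαAdm : α ∈ Adm (k+1) := by
    refine ⟨fun j => ?_, fun i h => (hα i h).2⟩
    have h1 := (hA j).2
    have h2 := (hB j).2
    have := j.isLt
    constructor <;> push_cast <;> omega
  have hβN : shift α (-1) ∈ Noninc (k+1) := by
    intro i h
    have := hα i h
    simp only [shift]
    omega
  have hβAdm : shift α (-1) ∈ Adm (k+1) := by
    refine ⟨fun j => ?_, fun i h => ?_⟩
    · have h1 := (hA j).2
      have h2 := (hB j).2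
      have := j.isLt
      simp only [shift]
      constructor <;> push_cast <;> omega
    · have := (hα i h).2
      simp only [shift]
      omega
  have hβ0 : shift α (-1) 0 = α 0 - 1 := by simp only [shift]; ring
  have hβl : shift α (-1) (Fin.last k) = α (Fin.last k) - 1 := by simp only [shift]; ring
  -- expressions for P α and P (shift α (-1))
  have hPα : P α = (∏ i ∈ Finset.Icc (1:ℤ) (α 0), Ff α i) *
      (∏ i ∈ Finset.Icc (α (Fin.last k) + 1) (0:ℤ), Gg α i) := by
    rw [P, if_pos ⟨hαAdm, hα⟩]; rfl
  have hPβ : P (shift α (-1)) = (∏ i ∈ Finset.Icc (1:ℤ) (α 0 - 1), Ff α (i+1)) *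
      (∏ i ∈ Finset.Icc (α (Fin.last k)) (0:ℤ), Gg α (i+1)) := by
    rw [P, if_pos ⟨hβAdm, hβN⟩, hβ0, hβl]
    congr 1
    · refine Finset.prod_congr rfl fun i _ => ?_
      rw [← Ff_shift]; rfl
    · have : α (Fin.last k) - 1 + 1 = α (Fin.last k) := by ring
      rw [this]
      refine Finset.prod_congr rfl fun i _ => ?_
      rw [← Gg_shift]; rfl
  -- reindex and split
  have hre1 : (∏ i ∈ Finset.Icc (1:ℤ) (α 0 - 1), Ff α (i+1)) =
      ∏ i ∈ Finset.Icc (2:ℤ) (α 0), Ff α i := by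
    rw [← prod_Icc_shift]
    norm_num
  have hre2 : (∏ i ∈ Finset.Icc (α (Fin.last k)) (0:ℤ), Gg α (i+1)) =
      ∏ i ∈ Finset.Icc (α (Fin.last k) + 1) (1:ℤ), Gg α i := by
    rw [← prod_Icc_shift]
    norm_num
  have hsp1 : (∏ i ∈ Finset.Icc (1:ℤ) (α 0), Ff α i) =
      Ff α 1 * ∏ i ∈ Finset.Icc (2:ℤ) (α 0), Ff α i := by
    rw [Icc_split 1 (α 0) h0']
    rw [Finset.prod_insert (by simp)]
    norm_num
  have hsp2 : (∏ i ∈ Finset.Icc (α (Fin.last k) + 1) (1:ℤ), Gg α i) =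
      (∏ i ∈ Finset.Icc (α (Fin.last k) + 1) (0:ℤ), Gg α i) * Gg α 1 := by
    rw [Icc_split_top (α (Fin.last k) + 1) 1 (by omega),
      Finset.prod_insert (by simp)]
    norm_num
    ring
  have hF1 : Ff α 1 = gbinom (nu α 1 + nu α 0 - 1) (nu α 1) := by
    norm_num [Ff]
  have hG1 : Gg α 1 = gbinom (nu α 1 + nu α 0 - 1) (nu α 0) := by
    norm_num [Gg]
  have key := gbinom_rec (nu α 1) (nu α 0)
  rw [hPα, hPβ, hre1, hre2, hsp1, hsp2, hF1, hG1]
  linear_combination ((∏ i ∈ Finset.Icc (2:ℤ) (α 0), Ff α i) *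
    (∏ i ∈ Finset.Icc (α (Fin.last k) + 1) (0:ℤ), Gg α i)) * key
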